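/- Let s ≥ 2, N ≥ 1, h ∈ ℝ, and let L be an N×N real matrix. Let a_{i,j} (for 2 ≤ j < i ≤ s), b_j (for 2 ≤ j ≤ s), d_i (for 2 ≤ i ≤ s), and D be N×N real matrices, each of which commutes with L (these play the roles of a_{i,j}(hL), b_j(hL), c_i φ₁(c_i hL), and φ₁(hL)). Let f : ℝ^N → ℝ^N and define g(y) = f(y) − L·y. Define the stages Y₁ = yₙ and, for 2 ≤ i ≤ s, Y_i = yₙ + h·d_i·f(yₙ) + h·∑_{j=2}^{i−1} a_{i,j}·(g(Y_j) − g(yₙ)), and the step y_{n+1} = yₙ + h·D·f(yₙ) + h·∑_{j=2}^{s} b_j·(g(Y_j) − g(yₙ)). Let Â be the (s−1)×(s−1) block matrix with (j,k) block h·L·a_{j,k} (strictly lower triangular in blocks), so that the block matrix E := (I_{s−1} + Â)^{−1} exists. Define α_{i,1} (2 ≤ i ≤ s) as the i-th block of E applied to the block vector (d₂, …, d_s), define the block matrix (α_{i,j})_{2≤i,j≤s} := E·(a_{i,j})_{2≤i,j≤s}, define β₁ := D − ∑_{j=2}^{s} b_j·(hL)·α_{j,1}, and define (β₂, …, β_s)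 as the block row vector (b₂, …, b_s)·E. Then for every 2 ≤ i ≤ s one has Y_i = yₙ + h·α_{i,1}·f(yₙ) + h·∑_{j=2}^{i−1} α_{i,j}·(f(Y_j) − f(yₙ)), and y_{n+1} = yₙ + h·β₁·f(yₙ) + h·∑_{j=2}^{s} β_j·(f(Y_j) − f(yₙ)). -/

import Mathlib

private lemma sum_mulVec {m n ι R : Type*} [Fintype n] [NonUnitalNonAssocSemiring R]
    (t : Finset ι) (M : ι → Matrix m n R) (v : n → R) :
    (∑ j ∈ t, M j).mulVec v = ∑ j ∈ t, (M j).mulVec v := by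
  ext i
  simp only [Matrix.mulVec, dotProduct, Matrix.sum_apply, Finset.sum_apply,
    Finset.sum_mul]
  exact Finset.sum_comm

private lemma mulVec_sum {m n ι R : Type*} [Fintype n] [NonUnitalNonAssocSemiring R]
    (t : Finset ι) (M : Matrix m n R) (v : ι → n → R) :
    M.mulVec (∑ j ∈ t, v j) = ∑ j ∈ t, M.mulVec (v j) := by
  ext i
  simp only [Matrix.mulVec, dotProduct, Finset.sum_apply, Finset.mul_sum]
  exact Finset.sum_comm

private lemma tri_pow_eq_zero {n : ℕ} {R : Type*} [Ring R] (M : Matrix (Fin n) (Fin n) R)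
    (hM : ∀ i j, i ≤ j → M i j = 0) : M ^ n = 0 := by
  have key : ∀ k : ℕ, ∀ i j : Fin n, (i : ℕ) < (j : ℕ) + k → (M ^ k) i j = 0 := by
    intro k
    induction k with
    | zero =>
      intro i j hij
      simp only [Nat.add_zero] at hij
      have : i ≠ j := fun e => by simp [e] at hij
      simp [Matrix.one_apply_ne this]
    | succ k ih =>
      intro i j hij
      rw [pow_succ, Matrix.mul_apply]
      refine Finset.sum_eq_zero fun m _ => ?_
      by_cases hm : (i : ℕ) < (m : ℕ) + k
      · rw [ih i m hm, zero_mul]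
      · have hmj : (m : ℕ) ≤ (j : ℕ) := by omega
        rw [hM m j hmj, mul_zero]
  ext i j
  exact key n i j (by omega)

/-- Transformation theorem for exponential Runge–Kutta methods.

Stages `2,…,s` are indexed by `Fin (s-1)` (index `i : Fin (s-1)` stands for stage `i+2`).
`a i j` plays the role of `a_{i+2,j+2}(hL)` (strictly lower triangular), `b j` of
`b_{j+2}(hL)`, `d i` of `c_{i+2} φ₁(c_{i+2} hL)`, and `D` of `φ₁(hL)`; all commute
with `L`.  With `g(y) = f(y) − L·y`, stages `Y_i` and the step `ynext` given by the
exponential Runge–Kutta formulas, and with the transformed coefficients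
`E = (I + Â)⁻¹` (`Â` the block matrix with blocks `h·L·a_{j,k}`),
`α_{·,1} = E·(d₂,…,d_s)`, `(α_{i,j}) = E·(a_{i,j})`,
`β₁ = D − ∑_j b_j·(hL)·α_{j,1}`, `(β₂,…,β_s) = (b₂,…,b_s)·E`,
the same stages and step satisfy the transformed formulation in terms of `f` only. -/
theorem exprk_transformation {N s : ℕ} (hN : 1 ≤ N) (hs : 2 ≤ s) (h : ℝ)
    (L : Matrix (Fin N) (Fin N) ℝ)
    (a : Matrix (Fin (s - 1)) (Fin (s - 1)) (Matrix (Fin N) (Fin N) ℝ))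
    (ha : ∀ i j : Fin (s - 1), i ≤ j → a i j = 0)
    (haL : ∀ i j : Fin (s - 1), Commute L (a i j))
    (b : Fin (s - 1) → Matrix (Fin N) (Fin N) ℝ)
    (hbL : ∀ j, Commute L (b j))
    (d : Fin (s - 1) → Matrix (Fin N) (Fin N) ℝ)
    (hdL : ∀ i, Commute L (d i))
    (D : Matrix (Fin N) (Fin N) ℝ) (hDL : Commute L D)
    (f g : (Fin N → ℝ) → (Fin N → ℝ))
    (hg : ∀ y, g y = f y - L.mulVec y)
    (yn : Fin N → ℝ) (Y : Fin (s - 1) → (Fin N → ℝ)) (ynext : Fin N → ℝ)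
    (hY : ∀ i, Y i = yn + h • (d i).mulVec (f yn) +
        h • ∑ j ∈ Finset.univ.filter (fun j => j < i), (a i j).mulVec (g (Y j) - g yn))
    (hynext : ynext = yn + h • D.mulVec (f yn) +
        h • ∑ j, (b j).mulVec (g (Y j) - g yn))
    (Ahat E : Matrix (Fin (s - 1)) (Fin (s - 1)) (Matrix (Fin N) (Fin N) ℝ))
    (hAhat : Ahat = Matrix.of fun i j => h • (L * a i j))
    (hE : E = Ring.inverse (1 + Ahat))
    (α₁ : Fin (s - 1) → Matrix (Fin N) (Fin N) ℝ) (hα₁ : α₁ = E.mulVec d)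
    (αm : Matrix (Fin (s - 1)) (Fin (s - 1)) (Matrix (Fin N) (Fin N) ℝ))
    (hαm : αm = E * a)
    (β₁ : Matrix (Fin N) (Fin N) ℝ)
    (hβ₁ : β₁ = D - ∑ j, b j * (h • L) * α₁ j)
    (β : Fin (s - 1) → Matrix (Fin N) (Fin N) ℝ) (hβ : β = Matrix.vecMul b E) :
    (∀ i, Y i = yn + h • (α₁ i).mulVec (f yn) +
        h • ∑ j ∈ Finset.univ.filter (fun j => j < i), (αm i j).mulVec (f (Y j) - f yn)) ∧
      ynext = yn + h • β₁.mulVec (f yn) + h • ∑ j, (β j).mulVec (f (Y j) - f yn) := by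
  classical
  set F : Fin (s - 1) → (Fin N → ℝ) := fun j => f (Y j) - f yn with hF
  set Z : Fin (s - 1) → (Fin N → ℝ) := fun i => Y i - yn with hZdef
  set w : Fin (s - 1) → (Fin N → ℝ) :=
    fun i => h • (d i).mulVec (f yn) + h • ∑ j, (a i j).mulVec (F j) with hw
  -- basic facts about Ahat and E
  have hAtri : ∀ i j : Fin (s - 1), i ≤ j → Ahat i j = 0 := by
    intro i j hij
    rw [hAhat]
    show h • (L * a i j) = 0
    rw [ha i j hij, mul_zero, smul_zero]
  have hALc : ∀ i j, Commute L (Ahat i j) := by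
    intro i j
    rw [hAhat]
    show Commute L (h • (L * a i j))
    exact ((Commute.refl L).mul_right (haL i j)).smul_right h
  have hunit : IsUnit (1 + Ahat) :=
    IsNilpotent.isUnit_one_add ⟨s - 1, tri_pow_eq_zero Ahat hAtri⟩
  have hE1 : E * (1 + Ahat) = 1 := by
    rw [hE]; exact Ring.inverse_mul_cancel _ hunit
  have h1E : (1 + Ahat) * E = 1 := by
    rw [hE]; exact Ring.mul_inverse_cancel _ hunit
  have hadd : E + Ahat * E = 1 := by rw [← h1E, add_mul, one_mul]
  have hEeq' : E = 1 - E * Ahat := by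
    rw [mul_add, mul_one] at hE1
    exact eq_sub_of_add_eq hE1
  have hEentry : ∀ i j, E i j =
      (1 : Matrix (Fin (s - 1)) (Fin (s - 1)) (Matrix (Fin N) (Fin N) ℝ)) i j
        - ∑ k, Ahat i k * E k j := by
    intro i j
    have hEeq : E = 1 - Ahat * E := eq_sub_of_add_eq hadd
    conv_lhs => rw [hEeq]
    rw [Matrix.sub_apply, Matrix.mul_apply]
  have hEtri : ∀ i j : Fin (s - 1), i < j → E i j = 0 := by
    have key : ∀ n : ℕ, ∀ i j : Fin (s - 1), (i : ℕ) = n → i < j → E i j = 0 := by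
      intro n
      induction n using Nat.strong_induction_on with
      | _ n ih =>
        intro i j hin hij
        rw [hEentry i j, Matrix.one_apply_ne (Fin.ne_of_lt hij)]
        rw [Finset.sum_eq_zero, sub_zero]
        intro k _
        by_cases hk : k < i
        · rw [ih k.1 (by omega) k j rfl (lt_trans hk hij), mul_zero]
        · rw [hAtri i k (le_of_not_gt hk), zero_mul]
    exact fun i j => key i.1 i j rfl
  have hELc : ∀ i j, Commute L (E i j) := by
    have key : ∀ n : ℕ, ∀ i j : Fin (s - 1), (i : ℕ) = n → Commute L (E i j) := by
      intro n
      induction n using Nat.strong_induction_on with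
      | _ n ih =>
        intro i j hin
        rw [hEentry i j]
        refine Commute.sub_right ?_ ?_
        · by_cases hij : i = j
          · rw [hij, Matrix.one_apply_eq]; exact Commute.one_right L
          · rw [Matrix.one_apply_ne hij]; exact Commute.zero_right L
        · refine Commute.sum_right _ _ _ fun k _ => ?_
          by_cases hk : k < i
          · exact (hALc i k).mul_right (ih k.1 (by omega) k j rfl)
          · rw [hAtri i k (le_of_not_gt hk), zero_mul]; exact Commute.zero_right L
    exact fun i j => key i.1 i j rfl
  -- the derivative difference
  have hgd : ∀ j, g (Y j) - g yn = F j - L.mulVec (Z j) := by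
    intro j
    rw [hg, hg]
    simp only [hF, hZdef]
    rw [Matrix.mulVec_sub]
    abel
  -- the original stage recursion in fixed-point form
  have hstage : ∀ i, Z i + ∑ j, (Ahat i j).mulVec (Z j) = w i := by
    intro i
    have hYi : Y i = yn + h • (d i).mulVec (f yn) +
        h • ∑ j ∈ Finset.univ.filter (fun j => j < i),
          (a i j).mulVec (F j - L.mulVec (Z j)) := by
      rw [hY i]
      congr 2
      exact Finset.sum_congr rfl fun j _ => by rw [hgd j]
    have hfull : ∑ j ∈ Finset.univ.filter (fun j => j < i),
        (a i j).mulVec (F j - L.mulVec (Z j))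
        = ∑ j, (a i j).mulVec (F j - L.mulVec (Z j)) :=
      Finset.sum_subset (Finset.filter_subset _ _) (fun j _ hj => by
        rw [ha i j (le_of_not_gt (by simpa using hj)), Matrix.zero_mulVec])
    have hterm : ∀ j : Fin (s - 1), (a i j).mulVec (F j - L.mulVec (Z j))
        = (a i j).mulVec (F j) - (a i j * L).mulVec (Z j) := fun j => by
      rw [Matrix.mulVec_sub, Matrix.mulVec_mulVec]
    have hAj : ∀ j, (Ahat i j).mulVec (Z j) = h • (a i j * L).mulVec (Z j) := by
      intro j
      rw [hAhat]
      show (h • (L * a i j)).mulVec (Z j) = _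
      rw [(haL i j).eq, Matrix.smul_mulVec]
    have h1 : Z i = h • (d i).mulVec (f yn)
        + (h • ∑ j, (a i j).mulVec (F j) - h • ∑ j, (a i j * L).mulVec (Z j)) := by
      have : Z i = Y i - yn := by rw [hZdef]
      rw [this, hYi, hfull, Finset.sum_congr rfl fun j _ => hterm j,
        Finset.sum_sub_distrib, smul_sub]
      abel
    have h2 : ∑ j, (Ahat i j).mulVec (Z j) = h • ∑ j, (a i j * L).mulVec (Z j) := by
      rw [Finset.smul_sum]
      exact Finset.sum_congr rfl fun j _ => hAj j
    rw [h1, h2]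
    simp only [hw]
    abel
  -- the candidate solution
  set V : Fin (s - 1) → (Fin N → ℝ) := fun i => ∑ j, (E i j).mulVec (w j) with hVdef
  have hVrec : ∀ i, V i + ∑ j, (Ahat i j).mulVec (V j) = w i := by
    intro i
    have h2 : ∑ j, (Ahat i j).mulVec (V j) = ∑ k, ((Ahat * E) i k).mulVec (w k) := by
      simp only [hVdef]
      calc ∑ j, (Ahat i j).mulVec (∑ k, (E j k).mulVec (w k))
          = ∑ j, ∑ k, (Ahat i j * E j k).mulVec (w k) := by
            refine Finset.sum_congr rfl fun j _ => ?_
            rw [mulVec_sum]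
            exact Finset.sum_congr rfl fun k _ => Matrix.mulVec_mulVec _ _ _
        _ = ∑ k, ∑ j, (Ahat i j * E j k).mulVec (w k) := Finset.sum_comm
        _ = ∑ k, ((Ahat * E) i k).mulVec (w k) := by
            refine Finset.sum_congr rfl fun k _ => ?_
            rw [← sum_mulVec, ← Matrix.mul_apply]
    have h3 : V i + ∑ k, ((Ahat * E) i k).mulVec (w k)
        = ∑ k, ((1 : Matrix (Fin (s - 1)) (Fin (s - 1)) (Matrix (Fin N) (Fin N) ℝ)) i k).mulVec (w k) := by
      simp only [hVdef]
      rw [← Finset.sum_add_distrib]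
      refine Finset.sum_congr rfl fun k _ => ?_
      rw [← Matrix.add_mulVec, ← Matrix.add_apply, hadd]
    rw [h2, h3, Finset.sum_eq_single i]
    · rw [Matrix.one_apply_eq, Matrix.one_mulVec]
    · intro k _ hk
      rw [Matrix.one_apply_ne (Ne.symm hk), Matrix.zero_mulVec]
    · intro hi; exact absurd (Finset.mem_univ i) hi
  -- uniqueness: Z = V
  have hZV : ∀ i, Z i = V i := by
    have key : ∀ n : ℕ, ∀ i : Fin (s - 1), (i : ℕ) = n → Z i = V i := by
      intro n
      induction n using Nat.strong_induction_on with
      | _ n ih =>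
        intro i hin
        rw [eq_sub_of_add_eq (hstage i), eq_sub_of_add_eq (hVrec i)]
        congr 1
        refine Finset.sum_congr rfl fun j _ => ?_
        by_cases hj : j < i
        · rw [ih j.1 (by omega) j rfl]
        · rw [hAtri i j (le_of_not_gt hj), Matrix.zero_mulVec, Matrix.zero_mulVec]
    exact fun i => key i.1 i rfl
  -- explicit form of V
  have hα₁i : ∀ i, α₁ i = ∑ j, E i j * d j := by
    intro i
    rw [hα₁]
    simp [Matrix.mulVec, dotProduct]
  have hVexp : ∀ i, V i = h • (α₁ i).mulVec (f yn) + h • ∑ k, (αm i k).mulVec (F k) := by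
    intro i
    simp only [hVdef, hw]
    calc ∑ j, (E i j).mulVec (h • (d j).mulVec (f yn) + h • ∑ k, (a j k).mulVec (F k))
        = ∑ j, (h • (E i j * d j).mulVec (f yn)
            + h • ∑ k, (E i j * a j k).mulVec (F k)) := by
          refine Finset.sum_congr rfl fun j _ => ?_
          rw [Matrix.mulVec_add, Matrix.mulVec_smul, Matrix.mulVec_smul,
            Matrix.mulVec_mulVec, mulVec_sum]
          congr 2
          exact Finset.sum_congr rfl fun k _ => Matrix.mulVec_mulVec _ _ _
      _ = h • (∑ j, E i j * d j).mulVec (f yn)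
            + h • ∑ k, (∑ j, E i j * a j k).mulVec (F k) := by
          rw [Finset.sum_add_distrib, ← Finset.smul_sum, ← Finset.smul_sum, ← sum_mulVec]
          congr 2
          rw [Finset.sum_comm]
          exact Finset.sum_congr rfl fun k _ => (sum_mulVec _ _ _).symm
      _ = h • (α₁ i).mulVec (f yn) + h • ∑ k, (αm i k).mulVec (F k) := by
          rw [hα₁i]
          congr 1
          refine congrArg _ (Finset.sum_congr rfl fun k _ => ?_)
          rw [hαm, Matrix.mul_apply]
  -- strict lower-triangularity of αm
  have hαtri : ∀ i k : Fin (s - 1), i ≤ k → αm i k = 0 := by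
    intro i k hik
    rw [hαm, Matrix.mul_apply]
    refine Finset.sum_eq_zero fun j _ => ?_
    by_cases hj : j ≤ i
    · rw [ha j k (le_trans hj hik), mul_zero]
    · rw [hEtri i j (lt_of_not_ge hj), zero_mul]
  -- the stage conclusion
  have stage : ∀ i, Y i = yn + h • (α₁ i).mulVec (f yn) +
      h • ∑ j ∈ Finset.univ.filter (fun j => j < i), (αm i j).mulVec (f (Y j) - f yn) := by
    intro i
    have hfil : ∑ j ∈ Finset.univ.filter (fun j => j < i), (αm i j).mulVec (F j)
        = ∑ j, (αm i j).mulVec (F j) :=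
      Finset.sum_subset (Finset.filter_subset _ _) (fun j _ hj => by
        rw [hαtri i j (le_of_not_gt (by simpa using hj)), Matrix.zero_mulVec])
    have hYZ : Y i = yn + Z i := by
      simp only [hZdef]
      abel
    rw [hYZ, hZV i, hVexp i, ← hfil]
    simp only [hF]
    abel
  refine ⟨stage, ?_⟩
  -- step part
  have hkey : ∀ j k, (h • L) * αm j k = (E * Ahat) j k := by
    intro j k
    rw [hαm, Matrix.mul_apply, Matrix.mul_apply, Finset.mul_sum]
    refine Finset.sum_congr rfl fun m _ => ?_
    have hAe : Ahat m k = h • (L * a m k) := by rw [hAhat]; rfl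
    rw [hAe]
    calc (h • L) * (E j m * a m k) = h • (L * (E j m * a m k)) := smul_mul_assoc h L _
      _ = h • (L * E j m * a m k) := by rw [mul_assoc]
      _ = h • (E j m * L * a m k) := by rw [(hELc j m).eq]
      _ = h • (E j m * (L * a m k)) := by rw [mul_assoc]
      _ = E j m * (h • (L * a m k)) := (mul_smul_comm h _ _).symm
  have hβ' : ∀ k, β k = b k - ∑ j, b j * (h • L) * αm j k := by
    intro k
    rw [hβ]
    show ∑ j, b j * E j k = _
    calc ∑ j, b j * E j k
        = ∑ j, (b j * (1 : Matrix (Fin (s - 1)) (Fin (s - 1)) (Matrix (Fin N) (Fin N) ℝ)) j k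
            - b j * (E * Ahat) j k) := by
          refine Finset.sum_congr rfl fun j _ => ?_
          conv_lhs => rw [hEeq']
          rw [Matrix.sub_apply, mul_sub]
      _ = ∑ j, b j * (1 : Matrix (Fin (s - 1)) (Fin (s - 1)) (Matrix (Fin N) (Fin N) ℝ)) j k
            - ∑ j, b j * (E * Ahat) j k := Finset.sum_sub_distrib _ _
      _ = b k - ∑ j, b j * (h • L) * αm j k := by
          congr 1
          · rw [Finset.sum_eq_single k]
            · rw [Matrix.one_apply_eq, mul_one]
            · intro j _ hj
              rw [Matrix.one_apply_ne hj, mul_zero]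
            · intro hk; exact absurd (Finset.mem_univ k) hk
          · refine Finset.sum_congr rfl fun j _ => ?_
            rw [mul_assoc, hkey j k]
  -- the main step computation
  have hT : ∑ j, (b j * L).mulVec (Z j)
      = ((D - β₁).mulVec (f yn)) + ∑ k, ((b k - β k).mulVec (F k)) := by
    have hDβ : D - β₁ = ∑ j, b j * (h • L) * α₁ j := by rw [hβ₁]; abel
    have hbβ : ∀ k, b k - β k = ∑ j, b j * (h • L) * αm j k := by
      intro k; rw [hβ' k]; abel
    calc ∑ j, (b j * L).mulVec (Z j)
        = ∑ j, ((b j * (h • L) * α₁ j).mulVec (f yn)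
            + ∑ k, (b j * (h • L) * αm j k).mulVec (F k)) := by
          refine Finset.sum_congr rfl fun j _ => ?_
          rw [hZV j, hVexp j]
          rw [Matrix.mulVec_add, Matrix.mulVec_smul, Matrix.mulVec_smul,
            Matrix.mulVec_mulVec, mulVec_sum, Finset.smul_sum]
          congr 1
          · rw [← Matrix.smul_mulVec]
            congr 1
            rw [Matrix.mul_smul, Matrix.smul_mul]
          · refine Finset.sum_congr rfl fun k _ => ?_
            rw [Matrix.mulVec_mulVec, ← Matrix.smul_mulVec]
            congr 1
            rw [Matrix.mul_smul, Matrix.smul_mul]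
      _ = (∑ j, b j * (h • L) * α₁ j).mulVec (f yn)
            + ∑ k, (∑ j, b j * (h • L) * αm j k).mulVec (F k) := by
          rw [Finset.sum_add_distrib, ← sum_mulVec]
          congr 1
          rw [Finset.sum_comm]
          exact Finset.sum_congr rfl fun k _ => (sum_mulVec _ _ _).symm
      _ = ((D - β₁).mulVec (f yn)) + ∑ k, ((b k - β k).mulVec (F k)) := by
          rw [hDβ]
          congr 1
          exact Finset.sum_congr rfl fun k _ => by rw [hbβ k]
  have hsum1 : ∑ j : Fin (s - 1), (b j).mulVec (F j - L.mulVec (Z j))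
      = ∑ j, (b j).mulVec (F j) - ∑ j, (b j * L).mulVec (Z j) := by
    rw [← Finset.sum_sub_distrib]
    refine Finset.sum_congr rfl fun j _ => ?_
    rw [Matrix.mulVec_sub, Matrix.mulVec_mulVec]
  have hstep : ynext = yn + h • D.mulVec (f yn) + h • ∑ j, (b j).mulVec (F j)
      - h • ∑ j, (b j * L).mulVec (Z j) := by
    rw [hynext, Finset.sum_congr rfl fun j _ => congrArg (b j).mulVec (hgd j), hsum1, smul_sub]
    abel
  have hsum2 : ∑ k : Fin (s - 1), (b k - β k).mulVec (F k)
      = ∑ k, (b k).mulVec (F k) - ∑ k, (β k).mulVec (F k) := by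
    rw [← Finset.sum_sub_distrib]
    refine Finset.sum_congr rfl fun k _ => ?_
    rw [Matrix.sub_mulVec]
  have final : ynext = yn + h • β₁.mulVec (f yn) + h • ∑ j, (β j).mulVec (F j) := by
    rw [hstep, hT, smul_add, Matrix.sub_mulVec, hsum2, smul_sub, smul_sub]
    abel
  simpa only [hF] using final
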